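/- Let $b \ge 2$, $m \ge 1$, let $w_j \le m$ be nonnegative integers for $j$ in a nonempty finite set $\mathfrak{u}$, and define $T_v(x) = \lceil x b^v \rceil / b^v$ for $x \in (0,1]$. Let $P \subseteq [0,1)^{\mathfrak{u}}$ be a finite multiset of points all of whose $j$-th coordinates lie in $\{h/b^{m-w_j} : 0 \le h < b^{m-w_j}\}$. Then for every $\boldsymbol{x} = (x_j)_{j\in\mathfrak{u}} \in (0,1]^{\mathfrak{u}}$, with $\overline{x}_j = T_{m-w_j}(x_j)$: (a) $\#\{\boldsymbol{z} \in P : z_j < x_j \ \forall j\} = \#\{\boldsymbol{z} \in P : z_j < \overline{x}_j \ \forall j\}$; and (b) $\left|\prod_{j\in\mathfrak{u}} x_j - \prod_{j\in\mathfrak{u}} \overline{x}_j\right| \le 1 - \prod_{j\in\mathfrak{u}}\left(1 - \frac{1}{b^{m-w_j}}\right)$. -/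
import Mathlib


open scoped Classical

lemma aux_prod_sub {ι : Type*} (s : Finset ι) (y δ : ι → ℝ)
    (hd0 : ∀ j, 0 ≤ δ j) (hdy : ∀ j, δ j ≤ y j) (hy1 : ∀ j, y j ≤ 1) :
    ∏ j ∈ s, y j - ∏ j ∈ s, (y j - δ j) ≤ 1 - ∏ j ∈ s, (1 - δ j) := by
  induction s using Finset.cons_induction with
  | empty => simp
  | cons a s ha ih =>
    rw [Finset.prod_cons, Finset.prod_cons, Finset.prod_cons]
    have h0 : ∀ j, (0:ℝ) ≤ y j - δ j := fun j => by linarith [hdy j]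
    have h0' : ∀ j, (0:ℝ) ≤ 1 - δ j := fun j => by linarith [hdy j, hy1 j]
    have hy0 : ∀ j, (0:ℝ) ≤ y j := fun j => le_trans (hd0 j) (hdy j)
    have hle : ∏ j ∈ s, (y j - δ j) ≤ ∏ j ∈ s, y j :=
      Finset.prod_le_prod (fun j _ => h0 j) (fun j _ => by linarith [hd0 j])
    have hle2 : ∏ j ∈ s, (y j - δ j) ≤ ∏ j ∈ s, (1 - δ j) :=
      Finset.prod_le_prod (fun j _ => h0 j) (fun j _ => by linarith [hy1 j])
    have hdp0 : 0 ≤ ∏ j ∈ s, (1 - δ j) := Finset.prod_nonneg fun j _ => h0' j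
    have key : y a * ∏ j ∈ s, y j - (y a - δ a) * ∏ j ∈ s, (y j - δ j)
        = y a * (∏ j ∈ s, y j - ∏ j ∈ s, (y j - δ j)) + δ a * ∏ j ∈ s, (y j - δ j) := by
      ring
    rw [key]
    have h1 : y a * (∏ j ∈ s, y j - ∏ j ∈ s, (y j - δ j))
        ≤ 1 - ∏ j ∈ s, (1 - δ j) := by
      calc y a * (∏ j ∈ s, y j - ∏ j ∈ s, (y j - δ j))
          ≤ 1 * (∏ j ∈ s, y j - ∏ j ∈ s, (y j - δ j)) := by
            apply mul_le_mul_of_nonneg_right (hy1 a); linarith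
        _ = ∏ j ∈ s, y j - ∏ j ∈ s, (y j - δ j) := by ring
        _ ≤ 1 - ∏ j ∈ s, (1 - δ j) := ih
    have h2 : δ a * ∏ j ∈ s, (y j - δ j) ≤ δ a * ∏ j ∈ s, (1 - δ j) :=
      mul_le_mul_of_nonneg_left hle2 (hd0 a)
    nlinarith [h1, h2]

theorem stmt17 {ι : Type*} [Fintype ι] [Nonempty ι] (b m : ℕ) (hb : 2 ≤ b) (hm : 1 ≤ m)
    (w : ι → ℕ) (hw : ∀ j, w j ≤ m)
    (K : ℕ) (p : Fin K → ι → ℝ)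
    (hp : ∀ k j, ∃ h : ℕ, h < b^(m - w j) ∧ p k j = (h:ℝ) / (b:ℝ)^(m - w j))
    (x : ι → ℝ) (hx : ∀ j, 0 < x j ∧ x j ≤ 1) :
    (Finset.univ.filter (fun k : Fin K => ∀ j, p k j < x j)).card =
      (Finset.univ.filter (fun k : Fin K => ∀ j,
        p k j < (⌈x j * (b:ℝ)^(m - w j)⌉ : ℝ) / (b:ℝ)^(m - w j))).card ∧
    |(∏ j, x j) - ∏ j, (⌈x j * (b:ℝ)^(m - w j)⌉ : ℝ) / (b:ℝ)^(m - w j)| ≤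
      1 - ∏ j, (1 - 1/(b:ℝ)^(m - w j)) := by
  have hbpos : ∀ j, (0:ℝ) < (b:ℝ)^(m - w j) := fun j =>
    pow_pos (by exact_mod_cast Nat.lt_of_lt_of_le Nat.zero_lt_two hb) _
  set y : ι → ℝ := fun j => (⌈x j * (b:ℝ)^(m - w j)⌉ : ℝ) / (b:ℝ)^(m - w j) with hy
  have hxy : ∀ j, x j ≤ y j := fun j => by
    rw [hy, le_div_iff₀ (hbpos j)]
    exact Int.le_ceil _
  have hceil_pos : ∀ j, (1:ℤ) ≤ ⌈x j * (b:ℝ)^(m - w j)⌉ := fun j =>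
    Int.ceil_pos.mpr (mul_pos (hx j).1 (hbpos j))
  have hy1 : ∀ j, y j ≤ 1 := fun j => by
    rw [hy, div_le_one (hbpos j)]
    have : ⌈x j * (b:ℝ)^(m - w j)⌉ ≤ ⌈((b:ℝ)^(m - w j) : ℝ)⌉ :=
      Int.ceil_le_ceil (by nlinarith [(hx j).2, hbpos j])
    calc ((⌈x j * (b:ℝ)^(m - w j)⌉ : ℝ)) ≤ (⌈((b:ℝ)^(m - w j) : ℝ)⌉ : ℝ) := by
          exact_mod_cast this
      _ = (b:ℝ)^(m - w j) := by
          rw [show ((b:ℝ)^(m - w j)) = (((b^(m - w j) : ℕ) : ℤ) : ℝ) by push_cast; ring]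
          rw [Int.ceil_intCast]
  constructor
  · -- part (a)
    congr 1
    apply Finset.filter_congr
    intro k _
    show _ ↔ _
    constructor
    · intro h j
      exact lt_of_lt_of_le (h j) (hxy j)
    · intro h j
      obtain ⟨n, hn, hpk⟩ := hp k j
      have := h j
      rw [hpk, div_lt_div_iff₀ (hbpos j) (hbpos j)] at this
      have hn2 : ((n:ℤ)) < ⌈x j * (b:ℝ)^(m - w j)⌉ := by
        have : ((n:ℝ)) < (⌈x j * (b:ℝ)^(m - w j)⌉ : ℝ) := by
          nlinarith [hbpos j]
        exact_mod_cast this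
      have hn3 : (n:ℝ) < x j * (b:ℝ)^(m - w j) := Int.lt_ceil.mp hn2
      rw [hpk, div_lt_iff₀ (hbpos j)]
      linarith
  · -- part (b)
    set δ : ι → ℝ := fun j => 1/(b:ℝ)^(m - w j) with hδ
    have hd0 : ∀ j, 0 ≤ δ j := fun j => by positivity
    have hdy : ∀ j, δ j ≤ y j := fun j => by
      rw [hδ, hy, div_le_div_iff₀ (hbpos j) (hbpos j)]
      have : (1:ℝ) ≤ (⌈x j * (b:ℝ)^(m - w j)⌉ : ℝ) := by exact_mod_cast hceil_pos j
      nlinarith [hbpos j]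
    have hxlb : ∀ j, y j - δ j ≤ x j := fun j => by
      rw [hy, hδ, div_sub_div_same, div_le_iff₀ (hbpos j)]
      have := Int.ceil_lt_add_one (x j * (b:ℝ)^(m - w j))
      linarith
    have hprodx : ∏ j, (y j - δ j) ≤ ∏ j, x j :=
      Finset.prod_le_prod (fun j _ => by linarith [hdy j, hd0 j]) (fun j _ => hxlb j)
    have hprodxy : ∏ j, x j ≤ ∏ j, y j :=
      Finset.prod_le_prod (fun j _ => le_of_lt (hx j).1) (fun j _ => hxy j)
    have hmain := aux_prod_sub Finset.univ y δ hd0 hdy hy1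
    rw [abs_sub_comm, abs_of_nonneg (by linarith)]
    linarith
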